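/- Let X = {X ∈ ℂ^{N×L} : X Xᴴ = L·R} with Tr(R) = P_T, and let H = {H ∈ ℂ^{K×N} : ‖H − H̄‖ ≤ θ} for a norm ‖·‖ satisfying ‖M‖_F ≤ B‖M‖ for all M. Then the function f(H) = min_{X ∈ X} ‖H X − S‖_F² is L_f-Lipschitz on H with respect to ‖·‖, where L_f = 2 B L P_T (‖H̄‖_F + Bθ) + 2 B √(L P_T) ‖S‖_F. -/

import Mathlib

open scoped Matrix ComplexOrder

/-- Squared Frobenius norm. -/
noncomputable def frobSq {m n : ℕ} (M : Matrix (Fin m) (Fin n) ℂ) : ℝ :=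
  ∑ i, ∑ j, ‖M i j‖ ^ 2

section FrobAux

attribute [local instance] Matrix.frobeniusNormedAddCommGroup

lemma frobSq_nonneg {m n : ℕ} (M : Matrix (Fin m) (Fin n) ℂ) : 0 ≤ frobSq M := by
  unfold frobSq; positivity

lemma norm_eq_sqrt_frobSq {m n : ℕ} (M : Matrix (Fin m) (Fin n) ℂ) :
    ‖M‖ = Real.sqrt (frobSq M) := by
  rw [Matrix.frobenius_norm_def, Real.sqrt_eq_rpow, frobSq]
  congr 1
  refine Finset.sum_congr rfl fun i _ => Finset.sum_congr rfl fun j _ => ?_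
  rw [← Real.rpow_natCast ‖M i j‖ 2]
  norm_num

lemma frobSq_eq_sq_norm {m n : ℕ} (M : Matrix (Fin m) (Fin n) ℂ) :
    frobSq M = ‖M‖ ^ 2 := by
  rw [norm_eq_sqrt_frobSq, Real.sq_sqrt (frobSq_nonneg M)]

lemma trace_mul_conjTranspose_eq {n l : ℕ} (X : Matrix (Fin n) (Fin l) ℂ) :
    (X * Xᴴ).trace = (frobSq X : ℂ) := by
  simp only [Matrix.trace, Matrix.diag, Matrix.mul_apply, Matrix.conjTranspose_apply, frobSq]
  push_cast
  refine Finset.sum_congr rfl fun i _ => Finset.sum_congr rfl fun j _ => ?_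
  rw [Complex.star_def, Complex.mul_conj, Complex.normSq_eq_norm_sq]
  push_cast; ring

/-- Norm of any feasible `X`. -/
lemma norm_X {N L : ℕ} (R : Matrix (Fin N) (Fin N) ℂ) (P_T : ℝ)
    (htr : R.trace = (P_T : ℂ)) (X : Matrix (Fin N) (Fin L) ℂ)
    (hX : X * Xᴴ = (L : ℂ) • R) : ‖X‖ = Real.sqrt (L * P_T) := by
  have h1 : (frobSq X : ℂ) = ((L : ℝ) * P_T : ℝ) := by
    rw [← trace_mul_conjTranspose_eq, hX, Matrix.trace_smul, htr, smul_eq_mul]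
    push_cast; ring
  have h2 : frobSq X = (L : ℝ) * P_T := by exact_mod_cast h1
  rw [norm_eq_sqrt_frobSq, h2]

/-- Pointwise bound. -/
lemma pointwise {K N L : ℕ} (S : Matrix (Fin K) (Fin L) ℂ)
    (ρ r c : ℝ)
    (H₁ H₂ : Matrix (Fin K) (Fin N) ℂ) (h1 : ‖H₁‖ ≤ ρ) (h2 : ‖H₂‖ ≤ ρ)
    (hc : ‖H₁ - H₂‖ ≤ c)
    (X : Matrix (Fin N) (Fin L) ℂ) (hX : ‖X‖ = r) :
    frobSq (H₁ * X - S) ≤ frobSq (H₂ * X - S) + 2 * ((ρ * r + ‖S‖) * r) * c := by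
  set a := ‖H₁ * X - S‖ with ha
  set b := ‖H₂ * X - S‖ with hb
  have hab : a ≤ b + ‖H₁ - H₂‖ * r := by
    have : H₁ * X - S = (H₂ * X - S) + (H₁ - H₂) * X := by rw [Matrix.sub_mul]; abel
    calc a ≤ b + ‖(H₁ - H₂) * X‖ := by rw [ha, this]; exact norm_add_le _ _
      _ ≤ b + ‖H₁ - H₂‖ * r := by
          have := Matrix.frobenius_norm_mul (H₁ - H₂) X
          rw [hX] at this; linarith
  have haρ : a ≤ ρ * r + ‖S‖ := by
    have h3 : ‖H₁ * X‖ ≤ ‖H₁‖ * ‖X‖ := Matrix.frobenius_norm_mul _ _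
    have h4 : a ≤ ‖H₁ * X‖ + ‖S‖ := norm_sub_le _ _
    have h5 : (0:ℝ) ≤ ‖X‖ := norm_nonneg _
    rw [hX] at h3 h5
    nlinarith [norm_nonneg (H₁ * X)]
  have hbρ : b ≤ ρ * r + ‖S‖ := by
    have h3 : ‖H₂ * X‖ ≤ ‖H₂‖ * ‖X‖ := Matrix.frobenius_norm_mul _ _
    have h4 : b ≤ ‖H₂ * X‖ + ‖S‖ := norm_sub_le _ _
    have h5 : (0:ℝ) ≤ ‖X‖ := norm_nonneg _
    rw [hX] at h3 h5
    nlinarith [norm_nonneg (H₂ * X)]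
  have hr : 0 ≤ r := hX ▸ norm_nonneg _
  have hd : 0 ≤ ‖H₁ - H₂‖ := norm_nonneg _
  have ha0 : 0 ≤ a := norm_nonneg _
  have hb0 : 0 ≤ b := norm_nonneg _
  have hab0 : 0 ≤ a + b := by linarith
  have key : a ^ 2 - b ^ 2 ≤ ‖H₁ - H₂‖ * r * (a + b) := by
    nlinarith [mul_le_mul_of_nonneg_right (show a - b ≤ ‖H₁ - H₂‖ * r by linarith) hab0]
  have hc0 : 0 ≤ c := le_trans hd hc
  have hS0 : 0 ≤ ‖S‖ := norm_nonneg _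
  have step2 : ‖H₁ - H₂‖ * r * (a + b) ≤ (c * r) * (2 * (ρ * r + ‖S‖)) := by
    have l1 : ‖H₁ - H₂‖ * r ≤ c * r := mul_le_mul_of_nonneg_right hc hr
    have l2 : a + b ≤ 2 * (ρ * r + ‖S‖) := by linarith
    exact mul_le_mul l1 l2 hab0 (by positivity)
  rw [frobSq_eq_sq_norm, frobSq_eq_sq_norm, ← ha, ← hb]
  nlinarith [key, step2]

/-- One-sided inf bound. -/
lemma half {K N L : ℕ}
    (S : Matrix (Fin K) (Fin L) ℂ)
    (Xset : Set (Matrix (Fin N) (Fin L) ℂ))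
    (hXne : Xset.Nonempty)
    (ρ r c : ℝ)
    (hXn : ∀ X ∈ Xset, ‖X‖ = r)
    (H₁ H₂ : Matrix (Fin K) (Fin N) ℂ) (h1 : ‖H₁‖ ≤ ρ) (h2 : ‖H₂‖ ≤ ρ)
    (hc : ‖H₁ - H₂‖ ≤ c) :
    sInf ((fun X => frobSq (H₁ * X - S)) '' Xset) ≤
      sInf ((fun X => frobSq (H₂ * X - S)) '' Xset) + 2 * ((ρ * r + ‖S‖) * r) * c := by
  have hbdd : BddBelow ((fun X => frobSq (H₁ * X - S)) '' Xset) := by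
    refine ⟨0, ?_⟩
    rintro y ⟨X, _, rfl⟩
    exact frobSq_nonneg _
  have key : ∀ y ∈ (fun X => frobSq (H₂ * X - S)) '' Xset,
      sInf ((fun X => frobSq (H₁ * X - S)) '' Xset) - 2 * ((ρ * r + ‖S‖) * r) * c ≤ y := by
    rintro y ⟨X, hXm, rfl⟩
    have hle : sInf ((fun X => frobSq (H₁ * X - S)) '' Xset) ≤ frobSq (H₁ * X - S) :=
      csInf_le hbdd ⟨X, hXm, rfl⟩
    have hpt := pointwise S ρ r c H₁ H₂ h1 h2 hc X (hXn X hXm)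
    linarith
  have := le_csInf (hXne.image _) key
  linarith

end FrobAux

/-- Lipschitz continuity of f(H) = min_{X : XXᴴ = L·R} ‖HX − S‖_F² on the uncertainty
ball, with constant L_f = 2 B L P_T (‖H̄‖_F + Bθ) + 2 B √(L P_T) ‖S‖_F. -/
theorem f_lipschitz {K N L : ℕ} (hL : 0 < L)
    (R : Matrix (Fin N) (Fin N) ℂ) (hR : R.PosSemidef)
    (P_T : ℝ) (hPT : 0 < P_T) (htr : R.trace = (P_T : ℂ))
    (S : Matrix (Fin K) (Fin L) ℂ)
    (Xset : Set (Matrix (Fin N) (Fin L) ℂ))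
    (hXset : Xset = {X | X * Xᴴ = (L : ℂ) • R}) (hXne : Xset.Nonempty)
    (nrm : Matrix (Fin K) (Fin N) ℂ → ℝ)
    (B : ℝ) (hB : 0 < B)
    (hnrm : ∀ M : Matrix (Fin K) (Fin N) ℂ, Real.sqrt (frobSq M) ≤ B * nrm M)
    (Hbar : Matrix (Fin K) (Fin N) ℂ) (θ : ℝ) (hθ : 0 ≤ θ)
    (L_f : ℝ)
    (hLf : L_f = 2 * B * L * P_T * (Real.sqrt (frobSq Hbar) + B * θ) +
      2 * B * Real.sqrt (L * P_T) * Real.sqrt (frobSq S)) :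
    ∀ H₁, nrm (H₁ - Hbar) ≤ θ → ∀ H₂, nrm (H₂ - Hbar) ≤ θ →
      |sInf ((fun X => frobSq (H₁ * X - S)) '' Xset) -
        sInf ((fun X => frobSq (H₂ * X - S)) '' Xset)| ≤ L_f * nrm (H₁ - H₂) := by
  classical
  letI : NormedAddCommGroup (Matrix (Fin K) (Fin N) ℂ) := Matrix.frobeniusNormedAddCommGroup
  letI : NormedAddCommGroup (Matrix (Fin N) (Fin L) ℂ) := Matrix.frobeniusNormedAddCommGroup
  letI : NormedAddCommGroup (Matrix (Fin K) (Fin L) ℂ) := Matrix.frobeniusNormedAddCommGroup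
  intro H₁ h1 H₂ h2
  set ρ : ℝ := ‖Hbar‖ + B * θ with hρ
  set r : ℝ := Real.sqrt ((L : ℝ) * P_T) with hr
  set c : ℝ := B * nrm (H₁ - H₂) with hcdef
  have hnormball : ∀ H : Matrix (Fin K) (Fin N) ℂ, nrm (H - Hbar) ≤ θ → ‖H‖ ≤ ρ := by
    intro H hH
    have h3 : ‖H - Hbar‖ ≤ B * nrm (H - Hbar) := by
      rw [norm_eq_sqrt_frobSq]; exact hnrm _
    have h4 : B * nrm (H - Hbar) ≤ B * θ := by
      exact mul_le_mul_of_nonneg_left hH hB.le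
    have h5 : ‖H‖ ≤ ‖Hbar‖ + ‖H - Hbar‖ := by
      simpa using norm_add_le Hbar (H - Hbar)
    linarith
  have hH1 : ‖H₁‖ ≤ ρ := hnormball H₁ h1
  have hH2 : ‖H₂‖ ≤ ρ := hnormball H₂ h2
  have hXn : ∀ X ∈ Xset, ‖X‖ = r := by
    intro X hX
    rw [hXset] at hX
    exact norm_X R P_T htr X hX
  have hc1 : ‖H₁ - H₂‖ ≤ c := by
    rw [hcdef, norm_eq_sqrt_frobSq]; exact hnrm _
  have hc2 : ‖H₂ - H₁‖ ≤ c := by rw [← norm_neg]; simpa using hc1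
  have hLPT : (0:ℝ) ≤ (L : ℝ) * P_T := by positivity
  have hr2 : r ^ 2 = (L : ℝ) * P_T := Real.sq_sqrt hLPT
  have hLfc : L_f * nrm (H₁ - H₂) = 2 * ((ρ * r + ‖S‖) * r) * c := by
    rw [hLf, hcdef, hρ, norm_eq_sqrt_frobSq Hbar, norm_eq_sqrt_frobSq S]
    linear_combination (-(2 * B * (Real.sqrt (frobSq Hbar) + B * θ) * nrm (H₁ - H₂))) * hr2
  have hA := half S Xset hXne ρ r c hXn H₁ H₂ hH1 hH2 hc1
  have hB' := half S Xset hXne ρ r c hXn H₂ H₁ hH2 hH1 hc2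
  rw [hLfc]
  rw [abs_sub_le_iff]
  constructor <;> linarith
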